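/- Let ω = (j₃ j₂ j₁) be a 3-cycle in S_n and σ ∈ S_n. If j₁, j₂, j₃ lie in three pairwise distinct cycles of σ, then ℓ(ωσ) = ℓ(σ) − 2, and moreover j₁, j₂, j₃ all lie in one common cycle of ωσ. -/

import Mathlib

open Equiv

/-- Number of disjoint cycles of a permutation of `Fin n`, counting each fixed
point as a cycle of length 1. -/
def cycleCount {n : ℕ} (σ : Perm (Fin n)) : ℕ :=
  σ.cycleType.card + (n - σ.support.card)

variable {n : ℕ}

private lemma sc_pow_nat {σ : Perm (Fin n)} {a b : Fin n} (k : ℕ) (h : (σ ^ k) a = b) :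
    σ.SameCycle a b := ⟨(k : ℤ), by simpa [zpow_natCast] using h⟩

/-- outside the cycles of x and y, τ = swap x y * σ acts like σ. -/
private lemma tau_pow_eq (σ : Perm (Fin n)) (x y a : Fin n)
    (hax : ¬ σ.SameCycle a x) (hay : ¬ σ.SameCycle a y) (k : ℕ) :
    ((Equiv.swap x y * σ) ^ k) a = (σ ^ k) a := by
  induction k with
  | zero => simp
  | succ k ih =>
    have h1 : (σ ^ (k+1)) a ≠ x := fun h => hax (sc_pow_nat (k+1) h)
    have h2 : (σ ^ (k+1)) a ≠ y := fun h => hay (sc_pow_nat (k+1) h)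
    rw [pow_succ', Perm.mul_apply, ih, Perm.mul_apply]
    rw [pow_succ', Perm.mul_apply] at h1 h2
    rw [swap_apply_of_ne_of_ne h1 h2, pow_succ', Perm.mul_apply]

private lemma tau_transfer (σ : Perm (Fin n)) (x y : Fin n) (hxy : ¬ σ.SameCycle x y) :
    (Equiv.swap x y * σ).SameCycle x y ∧
    ∀ a, σ.SameCycle x a → (Equiv.swap x y * σ).SameCycle x a := by
  set τ := Equiv.swap x y * σ with hτ
  have hex : ∃ k, 0 < k ∧ (σ ^ k) x = x :=
    ⟨orderOf σ, orderOf_pos σ, by rw [pow_orderOf_eq_one]; rfl⟩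
  set p := Nat.find hex with hpdef
  obtain ⟨hp0, hpx⟩ := Nat.find_spec hex
  have hmin : ∀ j, j < p → ¬(0 < j ∧ (σ ^ j) x = x) := fun j hj => Nat.find_min hex hj
  have Sub : ∀ k, k < p → (τ ^ k) x = (σ ^ k) x := by
    intro k
    induction k with
    | zero => simp
    | succ k ih =>
      intro h
      have ihk := ih (lt_trans (Nat.lt_succ_self k) h)
      have h1 : (σ ^ (k+1)) x ≠ x := fun hh => hmin (k+1) h ⟨k.succ_pos, hh⟩
      have h2 : (σ ^ (k+1)) x ≠ y := fun hh => hxy (sc_pow_nat (k+1) hh)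
      rw [pow_succ', Perm.mul_apply, ihk, hτ, Perm.mul_apply]
      rw [pow_succ', Perm.mul_apply] at h1 h2
      rw [swap_apply_of_ne_of_ne h1 h2, pow_succ', Perm.mul_apply]
  obtain ⟨q, hq⟩ : ∃ q, p = q + 1 := ⟨p - 1, (Nat.succ_pred_eq_of_pos hp0).symm⟩
  have hτp : (τ ^ p) x = y := by
    have hsq : (σ ^ (q+1)) x = x := by rw [← hq]; exact hpx
    rw [pow_succ', Perm.mul_apply] at hsq
    rw [hq, pow_succ', Perm.mul_apply, Sub q (by omega), hτ, Perm.mul_apply, hsq,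
      swap_apply_left]
  refine ⟨sc_pow_nat p hτp, ?_⟩
  intro a h
  obtain ⟨k, -, hk⟩ := h.exists_pow_eq'
  have hfix : ∀ m, ((σ ^ p) ^ m) x = x := by
    intro m
    induction m with
    | zero => rfl
    | succ m ih => rw [pow_succ, Perm.mul_apply, hpx, ih]
  have hr : (σ ^ (k % p)) x = a := by
    calc (σ ^ (k % p)) x = (σ ^ (k % p)) (((σ ^ p) ^ (k / p)) x) := by rw [hfix]
    _ = (σ ^ (k % p + p * (k / p))) x := by rw [pow_add, Perm.mul_apply, pow_mul]
    _ = (σ ^ k) x := by rw [add_comm, Nat.div_add_mod]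
    _ = a := hk
  exact sc_pow_nat (k % p) (by rw [Sub (k % p) (Nat.mod_lt _ hp0), hr])

private lemma closure_lemma (τ : Perm (Fin n)) (A : Set (Fin n)) (hA : ∀ z ∈ A, τ z ∈ A)
    {a b : Fin n} (ha : a ∈ A) (h : τ.SameCycle a b) : b ∈ A := by
  obtain ⟨k, -, hk⟩ := h.exists_pow_eq'
  rw [← hk]
  clear hk
  induction k with
  | zero => exact ha
  | succ k ih => rw [pow_succ', Perm.mul_apply]; exact hA _ ih

private lemma sameCycle_swap_mul_iff (σ : Perm (Fin n)) (x y : Fin n)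
    (hxy : ¬ σ.SameCycle x y) (a b : Fin n) :
    (Equiv.swap x y * σ).SameCycle a b ↔
      σ.SameCycle a b ∨ (σ.SameCycle a x ∧ σ.SameCycle y b) ∨
        (σ.SameCycle a y ∧ σ.SameCycle x b) := by
  have hyx : ¬ σ.SameCycle y x := fun h => hxy h.symm
  obtain ⟨K1, TX⟩ := tau_transfer σ x y hxy
  obtain ⟨K1', TY⟩ := tau_transfer σ y x hyx
  rw [swap_comm y x] at K1' TY
  set τ := Equiv.swap x y * σ with hτ
  constructor
  · intro h
    by_cases hU : σ.SameCycle x a ∨ σ.SameCycle y a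
    · have hb : b ∈ {z | σ.SameCycle x z ∨ σ.SameCycle y z} := by
        refine closure_lemma τ _ ?_ hU h
        rintro z hz
        have hz' : σ.SameCycle x (σ z) ∨ σ.SameCycle y (σ z) :=
          hz.imp (fun h => Perm.sameCycle_apply_right.2 h)
            (fun h => Perm.sameCycle_apply_right.2 h)
        show σ.SameCycle x (τ z) ∨ σ.SameCycle y (τ z)
        rw [hτ, Perm.mul_apply, swap_apply_def]
        split_ifs with h1 h2
        · exact Or.inr Perm.SameCycle.rfl
        · exact Or.inl Perm.SameCycle.rfl
        · exact hz'
      rcases hU with hxa | hya <;> rcases hb with hxb | hyb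
      · exact Or.inl (hxa.symm.trans hxb)
      · exact Or.inr (Or.inl ⟨hxa.symm, hyb⟩)
      · exact Or.inr (Or.inr ⟨hya.symm, hxb⟩)
      · exact Or.inl (hya.symm.trans hyb)
    · push_neg at hU
      obtain ⟨hxa, hya⟩ := hU
      refine Or.inl (closure_lemma τ {z | σ.SameCycle a z} ?_ Perm.SameCycle.rfl h)
      intro z hz
      have hz' : σ.SameCycle a (σ z) := Perm.sameCycle_apply_right.2 hz
      have h1 : σ z ≠ x := fun hh => hxa (hh ▸ hz').symm
      have h2 : σ z ≠ y := fun hh => hya (hh ▸ hz').symm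
      show σ.SameCycle a (τ z)
      rw [hτ, Perm.mul_apply, swap_apply_of_ne_of_ne h1 h2]
      exact hz'
  · rintro (h | ⟨hax, hyb⟩ | ⟨hay, hxb⟩)
    · by_cases hxa : σ.SameCycle x a
      · exact (TX a hxa).symm.trans (TX b (hxa.trans h))
      by_cases hya : σ.SameCycle y a
      · exact (TY a hya).symm.trans (TY b (hya.trans h))
      · obtain ⟨k, -, hk⟩ := h.exists_pow_eq'
        exact sc_pow_nat k (by
          rw [tau_pow_eq σ x y a (fun hh => hxa hh.symm) (fun hh => hya hh.symm) k, hk])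
    · exact (TX a hax.symm).symm.trans (K1.trans (TY b hyb))
    · exact ((TY a hay.symm).symm.trans K1').trans (TX b hxb)

private instance quotSCFintype (σ : Perm (Fin n)) :
    Fintype (Quotient (Perm.SameCycle.setoid σ)) :=
  @Quotient.fintype _ _ (Perm.SameCycle.setoid σ)
    (fun a b => (inferInstance : Decidable (σ.SameCycle a b)))

private def ncyc (σ : Perm (Fin n)) : ℕ :=
  Fintype.card (Quotient (Perm.SameCycle.setoid σ))

private lemma ncyc_eq (σ : Perm (Fin n)) :
    ncyc σ = σ.cycleFactorsFinset.card + (n - σ.support.card) := by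
  classical
  let g : Fin n → ({c // c ∈ σ.cycleFactorsFinset} ⊕ {x : Fin n // σ x = x}) := fun a =>
    if h : σ a = a then Sum.inr ⟨a, h⟩
    else Sum.inl ⟨σ.cycleOf a, Perm.cycleOf_mem_cycleFactorsFinset_iff.2 (Perm.mem_support.2 h)⟩
  have hg : ∀ a b : Fin n, σ.SameCycle a b → g a = g b := by
    intro a b hab
    by_cases ha : σ a = a
    · have : a = b := hab.eq_of_left ha
      subst this; rfl
    · have hb : σ b ≠ b := fun h => ha ((hab.apply_eq_self_iff).2 h)
      simp only [g, dif_neg ha, dif_neg hb]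
      exact congrArg _ (Subtype.ext hab.cycleOf_eq)
  let f : Quotient (Perm.SameCycle.setoid σ) →
      ({c // c ∈ σ.cycleFactorsFinset} ⊕ {x : Fin n // σ x = x}) :=
    Quotient.lift g hg
  have hbij : Function.Bijective f := by
    constructor
    · refine Quotient.ind₂ ?_
      intro a b hab
      have hab' : g a = g b := hab
      refine Quotient.sound ?_
      show σ.SameCycle a b
      by_cases ha : σ a = a <;> by_cases hb : σ b = b
      · simp only [g, dif_pos ha, dif_pos hb] at hab'
        obtain rfl : a = b := Subtype.ext_iff.1 (Sum.inr_injective hab')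
        exact Perm.SameCycle.rfl
      · simp only [g, dif_pos ha, dif_neg hb] at hab'
        exact absurd hab' Sum.inr_ne_inl
      · simp only [g, dif_neg ha, dif_pos hb] at hab'
        exact absurd hab' Sum.inl_ne_inr
      · simp only [g, dif_neg ha, dif_neg hb] at hab'
        have hco : σ.cycleOf a = σ.cycleOf b := Subtype.ext_iff.1 (Sum.inl_injective hab')
        have : b ∈ (σ.cycleOf a).support := by
          rw [hco]
          exact Perm.mem_support_cycleOf_iff.2 ⟨Perm.SameCycle.rfl, Perm.mem_support.2 hb⟩
        exact (Perm.mem_support_cycleOf_iff.1 this).1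
    · rintro (⟨c, hc⟩ | ⟨x0, hx0⟩)
      · obtain ⟨hcyc, hsupp⟩ := Perm.mem_cycleFactorsFinset_iff.1 hc
        obtain ⟨a, ha, -⟩ := hcyc
        have hmem : a ∈ c.support := Perm.mem_support.2 ha
        have hσa : σ a ≠ a := by rw [← hsupp a hmem]; exact ha
        refine ⟨⟦a⟧, ?_⟩
        show g a = _
        simp only [g, dif_neg hσa]
        exact congrArg _ (Subtype.ext (Perm.cycle_is_cycleOf hmem hc).symm)
      · exact ⟨⟦x0⟧, by show g x0 = _; simp only [g, dif_pos hx0]⟩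
  have hcard := Fintype.card_of_bijective hbij
  unfold ncyc
  rw [hcard, Fintype.card_sum, Fintype.card_coe]
  congr 1
  have hfix : (Finset.univ.filter fun x : Fin n => σ x = x) = σ.supportᶜ := by
    ext z; simp [Perm.mem_support]
  rw [Fintype.card_subtype, hfix, Finset.card_compl, Fintype.card_fin]

private lemma ncyc_swap_mul (σ : Perm (Fin n)) (x y : Fin n) (hxy : ¬ σ.SameCycle x y) :
    ncyc σ = ncyc (Equiv.swap x y * σ) + 1 := by
  classical
  set τ := Equiv.swap x y * σ with hτ
  have hC := sameCycle_swap_mul_iff σ x y hxy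
  have hT : ∀ a b : Fin n, σ.SameCycle a b → τ.SameCycle a b := fun a b h =>
    (hC a b).2 (Or.inl h)
  have hK1 : τ.SameCycle x y := by
    have := (tau_transfer σ x y hxy).1
    rwa [← hτ] at this
  let φ : Quotient (Perm.SameCycle.setoid σ) → Quotient (Perm.SameCycle.setoid τ) :=
    Quotient.lift (fun a => (⟦a⟧ : Quotient (Perm.SameCycle.setoid τ)))
      (fun a b h => Quotient.sound (hT a b h))
  have key : (Finset.univ : Finset (Quotient (Perm.SameCycle.setoid σ))).card =
      ∑ t : Quotient (Perm.SameCycle.setoid τ),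
        (Finset.univ.filter fun q => φ q = t).card :=
    Finset.card_eq_sum_card_fiberwise (fun q _ => Finset.mem_univ (φ q))
  have hfib : ∀ t : Quotient (Perm.SameCycle.setoid τ),
      (Finset.univ.filter fun q => φ q = t).card =
        if t = (⟦x⟧ : Quotient (Perm.SameCycle.setoid τ)) then 2 else 1 := by
    intro t
    obtain ⟨c, rfl⟩ := Quotient.exists_rep t
    by_cases hcx : τ.SameCycle c x
    · rw [if_pos (Quotient.sound hcx)]
      have hset : (Finset.univ.filter fun q => φ q = (⟦c⟧ : Quotient (Perm.SameCycle.setoid τ)))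
          = {(⟦x⟧ : Quotient (Perm.SameCycle.setoid σ)), ⟦y⟧} := by
        ext q
        obtain ⟨a, rfl⟩ := Quotient.exists_rep q
        simp only [Finset.mem_filter, Finset.mem_univ, true_and, Finset.mem_insert,
          Finset.mem_singleton]
        have h1 : φ (⟦a⟧ : Quotient (Perm.SameCycle.setoid σ)) = ⟦c⟧ ↔ τ.SameCycle a c :=
          ⟨fun h => Quotient.exact h, fun h => Quotient.sound h⟩
        have h2 : (⟦a⟧ : Quotient (Perm.SameCycle.setoid σ)) = ⟦x⟧ ↔ σ.SameCycle a x :=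
          ⟨fun h => Quotient.exact h, fun h => Quotient.sound h⟩
        have h3 : (⟦a⟧ : Quotient (Perm.SameCycle.setoid σ)) = ⟦y⟧ ↔ σ.SameCycle a y :=
          ⟨fun h => Quotient.exact h, fun h => Quotient.sound h⟩
        rw [h1, h2, h3]
        constructor
        · intro h
          rcases (hC a x).1 (h.trans hcx) with h' | ⟨h', -⟩ | ⟨h', -⟩
          · exact Or.inl h'
          · exact Or.inl h'
          · exact Or.inr h'
        · rintro (h | h)
          · exact (hT a x h).trans hcx.symm
          · exact ((hT a y h).trans hK1.symm).trans hcx.symm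
      rw [hset]
      rw [Finset.card_insert_of_notMem (by
        simp only [Finset.mem_singleton]
        exact fun h => hxy (Quotient.exact h)), Finset.card_singleton]
    · rw [if_neg (fun h => hcx (show τ.SameCycle c x from Quotient.exact h))]
      have hset : (Finset.univ.filter fun q => φ q = (⟦c⟧ : Quotient (Perm.SameCycle.setoid τ)))
          = {(⟦c⟧ : Quotient (Perm.SameCycle.setoid σ))} := by
        ext q
        obtain ⟨a, rfl⟩ := Quotient.exists_rep q
        simp only [Finset.mem_filter, Finset.mem_univ, true_and, Finset.mem_singleton]
        have h1 : φ (⟦a⟧ : Quotient (Perm.SameCycle.setoid σ)) = ⟦c⟧ ↔ τ.SameCycle a c :=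
          ⟨fun h => Quotient.exact h, fun h => Quotient.sound h⟩
        have h2 : (⟦a⟧ : Quotient (Perm.SameCycle.setoid σ)) = ⟦c⟧ ↔ σ.SameCycle a c :=
          ⟨fun h => Quotient.exact h, fun h => Quotient.sound h⟩
        rw [h1, h2]
        constructor
        · intro h
          rcases (hC a c).1 h with h' | ⟨-, h'⟩ | ⟨-, h'⟩
          · exact h'
          · exact absurd (hK1.trans (hT y c h')).symm hcx
          · exact absurd (hT x c h').symm hcx
        · exact fun h => hT a c h
      rw [hset, Finset.card_singleton]
  rw [show ncyc σ = (Finset.univ : Finset (Quotient (Perm.SameCycle.setoid σ))).card from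
    (Finset.card_univ).symm, key]
  rw [Finset.sum_congr rfl (fun t _ => hfib t)]
  have : ∀ t : Quotient (Perm.SameCycle.setoid τ),
      (if t = (⟦x⟧ : Quotient (Perm.SameCycle.setoid τ)) then 2 else 1) =
        1 + (if t = ⟦x⟧ then 1 else 0) := by
    intro t; split_ifs <;> rfl
  rw [Finset.sum_congr rfl (fun t _ => this t), Finset.sum_add_distrib,
    Finset.sum_const, Finset.sum_ite_eq' Finset.univ
      (⟦x⟧ : Quotient (Perm.SameCycle.setoid τ)) (fun _ => 1),
    if_pos (Finset.mem_univ _), Finset.card_univ, smul_eq_mul, mul_one]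
  rfl

private lemma cycleCount_eq_ncyc (σ : Perm (Fin n)) : cycleCount σ = ncyc σ := by
  rw [ncyc_eq, cycleCount]
  congr 1
  simp [Perm.cycleType]

/-- If the three points of the 3-cycle `ω = (j₃ j₂ j₁)` (sending `j₃ ↦ j₂ ↦ j₁ ↦ j₃`)
lie in three pairwise distinct cycles of `σ`, then `ℓ(ωσ) = ℓ(σ) - 2` and
`j₁, j₂, j₃` all lie in a common cycle of `ωσ`. -/
theorem threeCycle_mul_case_three_distinct_cycles
    (n : ℕ) (σ ω : Perm (Fin n)) (j₁ j₂ j₃ : Fin n)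
    (h12 : j₁ ≠ j₂) (h13 : j₁ ≠ j₃) (h23 : j₂ ≠ j₃)
    (hω : ω = Equiv.swap j₃ j₂ * Equiv.swap j₂ j₁)
    (hc12 : ¬ σ.SameCycle j₁ j₂) (hc13 : ¬ σ.SameCycle j₁ j₃)
    (hc23 : ¬ σ.SameCycle j₂ j₃) :
    cycleCount (ω * σ) = cycleCount σ - 2 ∧
    (ω * σ).SameCycle j₁ j₂ ∧ (ω * σ).SameCycle j₁ j₃ ∧ (ω * σ).SameCycle j₂ j₃ := by

  subst hω
  have h21 : ¬ σ.SameCycle j₂ j₁ := fun h => hc12 h.symm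
  set τ₁ := Equiv.swap j₂ j₁ * σ with hτ₁
  have hC1 := sameCycle_swap_mul_iff σ j₂ j₁ h21
  have hK1 : τ₁.SameCycle j₂ j₁ := (tau_transfer σ j₂ j₁ h21).1
  have h32 : ¬ τ₁.SameCycle j₃ j₂ := by
    intro h
    rcases (hC1 j₃ j₂).1 h with h' | ⟨h', -⟩ | ⟨h', -⟩
    · exact hc23 h'.symm
    · exact hc23 h'.symm
    · exact hc13 h'.symm
  set τ₂ := Equiv.swap j₃ j₂ * τ₁ with hτ₂
  have hC2 := sameCycle_swap_mul_iff τ₁ j₃ j₂ h32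
  have hK2 : τ₂.SameCycle j₃ j₂ := (tau_transfer τ₁ j₃ j₂ h32).1
  have hmul : Equiv.swap j₃ j₂ * Equiv.swap j₂ j₁ * σ = τ₂ := by
    rw [hτ₂, hτ₁, mul_assoc]
  have hcount : ncyc σ = ncyc τ₂ + 2 := by
    rw [ncyc_swap_mul σ j₂ j₁ h21, ← hτ₁, ncyc_swap_mul τ₁ j₃ j₂ h32, ← hτ₂]
  have h21' : τ₂.SameCycle j₂ j₁ := (hC2 j₂ j₁).2 (Or.inl hK1)
  refine ⟨?_, ?_, ?_, ?_⟩
  · rw [hmul, cycleCount_eq_ncyc, cycleCount_eq_ncyc, hcount]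
    omega
  · rw [hmul]; exact h21'.symm
  · rw [hmul]; exact h21'.symm.trans hK2.symm
  · rw [hmul]; exact hK2.symm
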